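/- Let x₁, x₂, x₃ be pairwise distinct points in a real inner product space. Then the Menger curvature formula is invariant under every permutation of the three points: for any permutation σ of {1,2,3}, c_M(x_{σ(1)}, x_{σ(2)}, x_{σ(3)}) = c_M(x₁, x₂, x₃). -/

import Mathlib

open RealInnerProductSpace

/-- Cosine similarity of two vectors in a real inner product space. -/
noncomputable def cosSim {E : Type*} [NormedAddCommGroup E] [InnerProductSpace ℝ E]
    (u v : E) : ℝ :=
  ⟪u, v⟫ / (‖u‖ * ‖v‖)

/-- The Menger curvature formula for three points. -/
noncomputable def mengerCurvature {E : Type*} [NormedAddCommGroup E]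
    [InnerProductSpace ℝ E] (x₁ x₂ x₃ : E) : ℝ :=
  2 * Real.sqrt (1 - cosSim (x₂ - x₁) (x₃ - x₂) ^ 2) / ‖x₃ - x₁‖

lemma menger_eq {E : Type*} [NormedAddCommGroup E] [InnerProductSpace ℝ E]
    (x₁ x₂ x₃ : E) (h12 : x₁ ≠ x₂) (h23 : x₂ ≠ x₃) :
    mengerCurvature x₁ x₂ x₃ =
      2 * Real.sqrt (‖x₂ - x₁‖ ^ 2 * ‖x₃ - x₂‖ ^ 2 - ⟪x₂ - x₁, x₃ - x₂⟫ ^ 2) /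
        (‖x₂ - x₁‖ * ‖x₃ - x₂‖ * ‖x₃ - x₁‖) := by
  have ha : (0:ℝ) < ‖x₂ - x₁‖ := by
    rw [norm_pos_iff, sub_ne_zero]; exact fun h => h12 h.symm
  have hb : (0:ℝ) < ‖x₃ - x₂‖ := by
    rw [norm_pos_iff, sub_ne_zero]; exact fun h => h23 h.symm
  have hN : (0:ℝ) ≤ ‖x₂ - x₁‖ ^ 2 * ‖x₃ - x₂‖ ^ 2 - ⟪x₂ - x₁, x₃ - x₂⟫ ^ 2 := by
    have := abs_real_inner_le_norm (x₂ - x₁) (x₃ - x₂)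
    nlinarith [abs_nonneg (⟪x₂ - x₁, x₃ - x₂⟫), sq_abs (⟪x₂ - x₁, x₃ - x₂⟫)]
  unfold mengerCurvature cosSim
  have h1 : 1 - (⟪x₂ - x₁, x₃ - x₂⟫ / (‖x₂ - x₁‖ * ‖x₃ - x₂‖)) ^ 2 =
      (‖x₂ - x₁‖ ^ 2 * ‖x₃ - x₂‖ ^ 2 - ⟪x₂ - x₁, x₃ - x₂⟫ ^ 2) /
        (‖x₂ - x₁‖ * ‖x₃ - x₂‖) ^ 2 := by
    field_simp
  rw [h1, Real.sqrt_div hN, Real.sqrt_sq (by positivity)]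
  field_simp

lemma gram_shift {E : Type*} [NormedAddCommGroup E] [InnerProductSpace ℝ E] (u v : E) :
    ‖u‖ ^ 2 * ‖u + v‖ ^ 2 - ⟪u, u + v⟫ ^ 2 = ‖u‖ ^ 2 * ‖v‖ ^ 2 - ⟪u, v⟫ ^ 2 := by
  rw [norm_add_sq_real, inner_add_right, real_inner_self_eq_norm_sq]
  ring

lemma gram_shift' {E : Type*} [NormedAddCommGroup E] [InnerProductSpace ℝ E] (u v : E) :
    ‖u + v‖ ^ 2 * ‖v‖ ^ 2 - ⟪u + v, v⟫ ^ 2 = ‖u‖ ^ 2 * ‖v‖ ^ 2 - ⟪u, v⟫ ^ 2 := by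
  rw [norm_add_sq_real, inner_add_left, real_inner_self_eq_norm_sq]
  ring

lemma menger_swap12 {E : Type*} [NormedAddCommGroup E] [InnerProductSpace ℝ E]
    (x₁ x₂ x₃ : E) (h12 : x₁ ≠ x₂) (h23 : x₂ ≠ x₃) (h13 : x₁ ≠ x₃) :
    mengerCurvature x₂ x₁ x₃ = mengerCurvature x₁ x₂ x₃ := by
  rw [menger_eq x₂ x₁ x₃ (Ne.symm h12) h13, menger_eq x₁ x₂ x₃ h12 h23]
  have e1 : x₁ - x₂ = -(x₂ - x₁) := by abel
  have e2 : x₃ - x₁ = (x₂ - x₁) + (x₃ - x₂) := by abel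
  rw [e1, e2, norm_neg, inner_neg_left]
  rw [show (-⟪x₂ - x₁, x₂ - x₁ + (x₃ - x₂)⟫) ^ 2 = ⟪x₂ - x₁, x₂ - x₁ + (x₃ - x₂)⟫ ^ 2 by ring,
    gram_shift]
  ring

lemma menger_swap23 {E : Type*} [NormedAddCommGroup E] [InnerProductSpace ℝ E]
    (x₁ x₂ x₃ : E) (h12 : x₁ ≠ x₂) (h23 : x₂ ≠ x₃) (h13 : x₁ ≠ x₃) :
    mengerCurvature x₁ x₃ x₂ = mengerCurvature x₁ x₂ x₃ := by
  rw [menger_eq x₁ x₃ x₂ h13 (Ne.symm h23), menger_eq x₁ x₂ x₃ h12 h23]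
  have e1 : x₃ - x₁ = (x₂ - x₁) + (x₃ - x₂) := by abel
  have e2 : x₂ - x₃ = -(x₃ - x₂) := by abel
  rw [e1, e2, norm_neg, inner_neg_right]
  rw [show (-⟪x₂ - x₁ + (x₃ - x₂), x₃ - x₂⟫) ^ 2 = ⟪x₂ - x₁ + (x₃ - x₂), x₃ - x₂⟫ ^ 2 by ring,
    gram_shift']
  ring

theorem mengerCurvature_perm_invariant
    {E : Type*} [NormedAddCommGroup E] [InnerProductSpace ℝ E]
    (x : Fin 3 → E) (hx : Function.Injective x) (σ : Equiv.Perm (Fin 3)) :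
    mengerCurvature (x (σ 0)) (x (σ 1)) (x (σ 2)) =
      mengerCurvature (x 0) (x 1) (x 2) := by
  have key : ∀ a b c : Fin 3, a ≠ b → b ≠ c → a ≠ c →
      mengerCurvature (x a) (x b) (x c) = mengerCurvature (x 0) (x 1) (x 2) := by
    intro a b c hab hbc hac
    have d : ∀ i j : Fin 3, i ≠ j → x i ≠ x j := fun i j h hh => h (hx hh)
    have s12 := menger_swap12 (x 0) (x 1) (x 2) (d 0 1 (by decide)) (d 1 2 (by decide)) (d 0 2 (by decide))
    have s23 := menger_swap23 (x 0) (x 1) (x 2) (d 0 1 (by decide)) (d 1 2 (by decide)) (d 0 2 (by decide))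
    have t120 : mengerCurvature (x 1) (x 2) (x 0) = mengerCurvature (x 0) (x 1) (x 2) :=
      (menger_swap23 (x 1) (x 0) (x 2) (d 1 0 (by decide)) (d 0 2 (by decide)) (d 1 2 (by decide))).trans s12
    have t201 : mengerCurvature (x 2) (x 0) (x 1) = mengerCurvature (x 0) (x 1) (x 2) :=
      (menger_swap12 (x 0) (x 2) (x 1) (d 0 2 (by decide)) (d 2 1 (by decide)) (d 0 1 (by decide))).trans s23
    have t210 : mengerCurvature (x 2) (x 1) (x 0) = mengerCurvature (x 0) (x 1) (x 2) :=
      (menger_swap12 (x 1) (x 2) (x 0) (d 1 2 (by decide)) (d 2 0 (by decide)) (d 1 0 (by decide))).trans t120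
    fin_cases a <;> fin_cases b <;> fin_cases c <;>
      first
      | exact absurd rfl hab
      | exact absurd rfl hbc
      | exact absurd rfl hac
      | rfl
      | exact s12
      | exact s23
      | exact t120
      | exact t201
      | exact t210
  exact key (σ 0) (σ 1) (σ 2) (fun h => by simpa using σ.injective h)
    (fun h => by have := σ.injective h; simp at this) (fun h => by have := σ.injective h; simp at this)
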